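/- Fix default costs α, β ∈ [0,1] and a financial network without cash injections whose liability digraph {(i,j) : l_{ij} > 0} is either a directed tree (its underlying undirected graph is a tree/forest) or a single directed cycle. Then the strategy profile in which no bank removes any incoming edge is a pure Nash equilibrium of the edge-removal game. In particular, this holds because for every edge (i,j) of such a network there is no directed path from i to j other than the edge (i,j) itself, so bank j cannot benefit from removing the edge (i,j). -/

import Mathlib

open Finset

/-- `p` is a proportional clearing payment matrix for the network with external assets `e`,
liabilities `l` and default costs `α, β`. -/
def IsClearing {ι : Type*} [Fintype ι] (α β : ℝ) (e : ι → ℝ) (l : ι → ι → ℝ)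
    (p : ι → ι → ℝ) : Prop :=
  (∀ i j, 0 ≤ p i j) ∧ (∀ i j, p i j ≤ l i j) ∧
  (∀ i, (∑ j, l i j) ≤ e i + (∑ j, p j i) → ∀ j, p i j = l i j) ∧
  (∀ i, e i + (∑ j, p j i) < (∑ j, l i j) →
    ∀ j, p i j = (α * e i + β * (∑ k, p k i)) * l i j / (∑ k, l i k))

/-- `p` is the maximal clearing payment matrix. -/
def IsMaxClearing {ι : Type*} [Fintype ι] (α β : ℝ) (e : ι → ℝ) (l p : ι → ι → ℝ) : Prop :=
  IsClearing α β e l p ∧ ∀ q, IsClearing α β e l q → ∀ i j, q i j ≤ p i j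

/-- Total assets of bank `i` under payments `p`. -/
def assets {ι : Type*} [Fintype ι] (e : ι → ℝ) (p : ι → ι → ℝ) (i : ι) : ℝ :=
  e i + ∑ j, p j i

/-- The underlying undirected (simple) graph of the liability digraph
`{(i,j) : l i j > 0}`. -/
def underlyingGraph {ι : Type*} (l : ι → ι → ℝ) : SimpleGraph ι where
  Adj a b := a ≠ b ∧ (0 < l a b ∨ 0 < l b a)
  symm := by
    constructor
    intro a b h
    exact ⟨h.1.symm, h.2.symm⟩
  loopless := by
    constructor
    intro a h
    exact h.1 rfl

section Aux

variable {ι : Type*} [Fintype ι]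

noncomputable def Phi (α β : ℝ) (e : ι → ℝ) (l : ι → ι → ℝ) (p : ι → ι → ℝ) : ι → ι → ℝ :=
  fun i k => if (∑ y, l i y) ≤ e i + ∑ x, p x i then l i k
    else (α * e i + β * ∑ x, p x i) * l i k / (∑ y, l i y)

variable {α β : ℝ} {e : ι → ℝ} {l : ι → ι → ℝ}

lemma div_le_div_right'' {a b c : ℝ} (h : a ≤ b) (hc : 0 < c) : a / c ≤ b / c := by
  gcongr

lemma clearing_phi {p : ι → ι → ℝ} (h : IsClearing α β e l p) :
    ∀ i k, Phi α β e l p i k = p i k := by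
  intro i k
  unfold Phi
  split_ifs with hs
  · exact (h.2.2.1 i hs k).symm
  · exact (h.2.2.2 i (not_le.mp hs) k).symm

lemma phi_clearing {p : ι → ι → ℝ} (h0 : ∀ i k, 0 ≤ p i k) (hpl : ∀ i k, p i k ≤ l i k)
    (h : ∀ i k, Phi α β e l p i k = p i k) : IsClearing α β e l p := by
  refine ⟨h0, hpl, ?_, ?_⟩
  · intro i hi k
    have hk := h i k
    unfold Phi at hk
    rw [if_pos hi] at hk
    exact hk.symm
  · intro i hi k
    have hk := h i k
    unfold Phi at hk
    rw [if_neg (not_le.mpr hi)] at hk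
    exact hk.symm

lemma phi_mono (hα₁ : α ≤ 1) (hβ₀ : 0 ≤ β) (hβ₁ : β ≤ 1)
    (he : ∀ i, 0 ≤ e i) (hl : ∀ i k, 0 ≤ l i k)
    {p q : ι → ι → ℝ} (hp0 : ∀ i k, 0 ≤ p i k) (hpq : ∀ i k, p i k ≤ q i k) :
    ∀ i k, Phi α β e l p i k ≤ Phi α β e l q i k := by
  intro i k
  have hin : (∑ x, p x i) ≤ ∑ x, q x i := sum_le_sum fun x _ => hpq x i
  have hin0 : (0:ℝ) ≤ ∑ x, p x i := sum_nonneg fun x _ => hp0 x i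
  unfold Phi
  split_ifs with h1 h2 h2
  · exact le_refl _
  · exact absurd (h1.trans (by linarith)) h2
  · -- p default, q solvent
    have hd : e i + ∑ x, p x i < ∑ y, l i y := not_le.mp h1
    have hL : (0:ℝ) < ∑ y, l i y := lt_of_le_of_lt (add_nonneg (he i) hin0) hd
    have hnum : α * e i + β * ∑ x, p x i ≤ ∑ y, l i y := by nlinarith [he i]
    rw [div_le_iff₀ hL]
    nlinarith [mul_le_mul_of_nonneg_right hnum (hl i k)]
  · have hd : e i + ∑ x, p x i < ∑ y, l i y := not_le.mp h1
    have hL : (0:ℝ) < ∑ y, l i y := lt_of_le_of_lt (add_nonneg (he i) hin0) hd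
    have hnum : α * e i + β * ∑ x, p x i ≤ α * e i + β * ∑ x, q x i := by nlinarith
    exact div_le_div_right'' (mul_le_mul_of_nonneg_right hnum (hl i k)) hL

lemma phi_nonneg (hα₀ : 0 ≤ α) (hβ₀ : 0 ≤ β)
    (he : ∀ i, 0 ≤ e i) (hl : ∀ i k, 0 ≤ l i k)
    {p : ι → ι → ℝ} (hp0 : ∀ i k, 0 ≤ p i k) :
    ∀ i k, 0 ≤ Phi α β e l p i k := by
  intro i k
  have hin0 : (0:ℝ) ≤ ∑ x, p x i := sum_nonneg fun x _ => hp0 x i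
  unfold Phi
  split_ifs with h1
  · exact hl i k
  · have hd : e i + ∑ x, p x i < ∑ y, l i y := not_le.mp h1
    have hL : (0:ℝ) < ∑ y, l i y := lt_of_le_of_lt (add_nonneg (he i) hin0) hd
    have : (0:ℝ) ≤ α * e i + β * ∑ x, p x i := by nlinarith [he i]
    exact div_nonneg (mul_nonneg this (hl i k)) hL.le

lemma phi_le_l (hα₁ : α ≤ 1) (hβ₁ : β ≤ 1)
    (he : ∀ i, 0 ≤ e i) (hl : ∀ i k, 0 ≤ l i k)
    {p : ι → ι → ℝ} (hp0 : ∀ i k, 0 ≤ p i k) :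
    ∀ i k, Phi α β e l p i k ≤ l i k := by
  intro i k
  have hin0 : (0:ℝ) ≤ ∑ x, p x i := sum_nonneg fun x _ => hp0 x i
  unfold Phi
  split_ifs with h1
  · exact le_refl _
  · have hd : e i + ∑ x, p x i < ∑ y, l i y := not_le.mp h1
    have hL : (0:ℝ) < ∑ y, l i y := lt_of_le_of_lt (add_nonneg (he i) hin0) hd
    have hnum : α * e i + β * ∑ x, p x i ≤ ∑ y, l i y := by nlinarith [he i]
    rw [div_le_iff₀ hL]
    nlinarith [mul_le_mul_of_nonneg_right hnum (hl i k)]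

lemma le_maxClearing (hα₀ : 0 ≤ α) (hα₁ : α ≤ 1) (hβ₀ : 0 ≤ β) (hβ₁ : β ≤ 1)
    (he : ∀ i, 0 ≤ e i) (hl : ∀ i k, 0 ≤ l i k)
    {P : ι → ι → ℝ} (hP : IsMaxClearing α β e l P)
    {q : ι → ι → ℝ} (hq0 : ∀ i k, 0 ≤ q i k) (hql : ∀ i k, q i k ≤ l i k)
    (hqf : ∀ i k, q i k ≤ Phi α β e l q i k) : ∀ i k, q i k ≤ P i k := by
  classical
  set S : Set (ι → ι → ℝ) :=
    {p | (∀ i k, 0 ≤ p i k) ∧ (∀ i k, p i k ≤ l i k) ∧ ∀ i k, p i k ≤ Phi α β e l p i k}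
    with hS
  have hqS : q ∈ S := ⟨hq0, hql, hqf⟩
  set g : ι → ι → ℝ := fun i k => sSup ((fun p : ι → ι → ℝ => p i k) '' S) with hg
  have hbdd : ∀ i k, BddAbove ((fun p : ι → ι → ℝ => p i k) '' S) := by
    intro i k
    exact ⟨l i k, by rintro x ⟨p, hp, rfl⟩; exact hp.2.1 i k⟩
  have hle : ∀ p ∈ S, ∀ i k, p i k ≤ g i k := fun p hp i k => le_csSup (hbdd i k) ⟨p, hp, rfl⟩
  have hg0 : ∀ i k, 0 ≤ g i k := fun i k => le_trans (hq0 i k) (hle q hqS i k)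
  have hgl : ∀ i k, g i k ≤ l i k := fun i k =>
    csSup_le ⟨q i k, Set.mem_image_of_mem (fun p : ι → ι → ℝ => p i k) hqS⟩ (by rintro x ⟨p, hp, rfl⟩; exact hp.2.1 i k)
  have hgf : ∀ i k, g i k ≤ Phi α β e l g i k := fun i k =>
    csSup_le ⟨q i k, Set.mem_image_of_mem (fun p : ι → ι → ℝ => p i k) hqS⟩
      (by rintro x ⟨p, hp, rfl⟩
          exact le_trans (hp.2.2 i k) (phi_mono hα₁ hβ₀ hβ₁ he hl hp.1 (hle p hp) i k))
  have hPhiS : Phi α β e l g ∈ S :=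
    ⟨phi_nonneg hα₀ hβ₀ he hl hg0, phi_le_l hα₁ hβ₁ he hl hg0,
      fun i k => phi_mono hα₁ hβ₀ hβ₁ he hl hg0 hgf i k⟩
  have hfix : ∀ i k, Phi α β e l g i k = g i k := fun i k =>
    le_antisymm (hle _ hPhiS i k) (hgf i k)
  have hgP := hP.2 g (phi_clearing hg0 hgl hfix)
  exact fun i k => le_trans (hle q hqS i k) (hgP i k)

end Aux

lemma tree_unique {ι : Type*} (G : SimpleGraph ι) (hac : G.IsAcyclic) {j a x : ι}
    (haj : G.Adj j a) (hxj : G.Adj j x)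
    (hreach : Relation.ReflTransGen (fun u v => u ≠ j ∧ v ≠ j ∧ G.Adj u v) a x) :
    a = x := by
  classical
  obtain ⟨w, hw⟩ : ∃ w : G.Walk a x, j ∉ w.support := by
    clear hxj
    induction hreach with
    | refl => exact ⟨SimpleGraph.Walk.nil, by simpa using haj.ne⟩
    | tail hab hbc ih =>
      obtain ⟨w, hw⟩ := ih
      refine ⟨w.append (SimpleGraph.Walk.cons hbc.2.2 SimpleGraph.Walk.nil), ?_⟩
      rw [SimpleGraph.Walk.support_append]
      simp only [List.mem_append, SimpleGraph.Walk.support_cons, SimpleGraph.Walk.support_nil,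
        List.tail_cons, List.mem_singleton]
      rintro (h | h)
      · exact hw h
      · exact hbc.2.1 h.symm
  have hpath := w.bypass_isPath
  have hjp : j ∉ w.bypass.support := fun h => hw (w.support_bypass_subset h)
  have h1 : (SimpleGraph.Walk.cons hxj SimpleGraph.Walk.nil).IsPath :=
    SimpleGraph.Walk.IsPath.nil.cons (by simpa using hxj.ne)
  have h2 : (SimpleGraph.Walk.cons haj w.bypass).IsPath := hpath.cons hjp
  have hEq := hac.path_unique (⟨_, h1⟩ : G.Path j x) ⟨_, h2⟩
  have hwEq : SimpleGraph.Walk.cons hxj SimpleGraph.Walk.nil = SimpleGraph.Walk.cons haj w.bypass :=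
    congrArg Subtype.val hEq
  have hmem : a ∈ (SimpleGraph.Walk.cons hxj SimpleGraph.Walk.nil).support := by
    rw [hwEq, SimpleGraph.Walk.support_cons]
    exact List.mem_cons_of_mem _ w.bypass.start_mem_support
  simp only [SimpleGraph.Walk.support_cons, SimpleGraph.Walk.support_nil, List.mem_cons,
    List.mem_singleton] at hmem
  rcases hmem with h | h | h
  · exact absurd h.symm haj.ne
  · exact h
  · exact absurd h (by simp)

/-- In edge-removal games with default costs `α, β ∈ [0,1]` and without cash injections,
if the financial network is a directed tree (its underlying undirected graph is a
tree/forest, i.e. acyclic) or a single directed cycle, then the profile in which no bank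
removes any incoming edge is a pure Nash equilibrium: no bank `j` can strictly increase
its total assets by removing a subset `R` of its incoming edges. -/
theorem tree_or_cycle_no_removal_is_NE
    (ι : Type*) [Fintype ι] [DecidableEq ι]
    (α β : ℝ) (hα₀ : 0 ≤ α) (hα₁ : α ≤ 1) (hβ₀ : 0 ≤ β) (hβ₁ : β ≤ 1)
    (e : ι → ℝ) (he : ∀ i, 0 ≤ e i)
    (l : ι → ι → ℝ) (hl : ∀ i j, 0 ≤ l i j) (hdiag : ∀ i, l i i = 0)
    (hstruct : (underlyingGraph l).IsAcyclic ∨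
      ∃ σ : Equiv.Perm ι, σ.IsCycle ∧ σ.support = Finset.univ ∧
        ∀ i j, 0 < l i j ↔ j = σ i)
    (j : ι) (R : Finset ι)
    (P P' : ι → ι → ℝ)
    (hP : IsMaxClearing α β e l P)
    (hP' : IsMaxClearing α β e (fun a b => if b = j ∧ a ∈ R then 0 else l a b) P') :
    assets e P' j ≤ assets e P j := by
  classical
  set l' : ι → ι → ℝ := fun a b => if b = j ∧ a ∈ R then 0 else l a b with hl'def
  have hl'le : ∀ a b, l' a b ≤ l a b := by
    intro a b
    simp only [hl'def]
    split_ifs with h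
    · exact hl a b
    · exact le_refl _
  have hP'lel : ∀ a b, P' a b ≤ l a b := fun a b => le_trans (hP'.1.2.1 a b) (hl'le a b)
  suffices key : ∀ x, P' x j ≤ P x j by
    unfold assets
    exact add_le_add_right (Finset.sum_le_sum fun x _ => key x) (e j)
  rcases hstruct with hac | ⟨σ, hcyc, hsupp, hiff⟩
  · -- tree case
    set G := underlyingGraph l with hG
    set M : Set ι := {x | x ≠ j ∧ ∃ a, a ∈ R ∧ 0 < l a j ∧
      Relation.ReflTransGen (fun u v => u ≠ j ∧ v ≠ j ∧ G.Adj u v) a x} with hM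
    have hjM : j ∉ M := fun h => h.1 rfl
    have hstep : ∀ x y, x ∈ M → y ≠ j → G.Adj x y → y ∈ M := by
      rintro x y ⟨hxj, a, haR, haj, hr⟩ hyj hadj
      exact ⟨hyj, a, haR, haj, hr.tail ⟨hxj, hyj, hadj⟩⟩
    have hcross : ∀ x y, x ∈ M → y ∉ M → y ≠ j → l x y = 0 ∧ l y x = 0 := by
      intro x y hx hy hyj
      by_contra hcon
      push_neg at hcon
      have hadj : G.Adj x y := by
        refine ⟨fun h => hy (h ▸ hx), ?_⟩
        by_cases h1 : l x y = 0
        · exact Or.inr (lt_of_le_of_ne (hl y x) (Ne.symm (hcon h1)))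
        · exact Or.inl (lt_of_le_of_ne (hl x y) (Ne.symm h1))
      exact hy (hstep x y hx hyj hadj)
    have haR_M : ∀ a, a ∈ R → 0 < l a j → a ∈ M := by
      intro a haR haj
      have haj' : a ≠ j := fun h => by rw [h, hdiag] at haj; exact lt_irrefl _ haj
      exact ⟨haj', a, haR, haj, Relation.ReflTransGen.refl⟩
    have hMR : ∀ x, x ∈ M → 0 < l x j → x ∈ R := by
      rintro x ⟨hxj, a, haR, haj, hr⟩ hxjpos
      have haj' : a ≠ j := fun h => by rw [h, hdiag] at haj; exact lt_irrefl _ haj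
      have hadjja : G.Adj j a := ⟨Ne.symm haj', Or.inr haj⟩
      have hadjjx : G.Adj j x := ⟨Ne.symm hxj, Or.inr hxjpos⟩
      have := tree_unique G hac hadjja hadjjx hr
      exact this ▸ haR
    -- if x ∈ M then l' x j = 0
    have hMl' : ∀ x, x ∈ M → l' x j = 0 := by
      intro x hx
      simp only [hl'def]
      split_ifs with h
      · rfl
      · rcases eq_or_lt_of_le (hl x j) with h0 | h0
        · exact h0.symm
        · exact absurd ⟨by trivial, hMR x hx h0⟩ h
    -- rows of l and l' agree outside M
    have hrowl : ∀ u, u ∉ M → ∀ z, l' u z = l u z := by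
      intro u hu z
      simp only [hl'def]
      split_ifs with h
      · obtain ⟨rfl, huR⟩ := h
        rcases eq_or_lt_of_le (hl u z) with h0 | h0
        · exact h0
        · exact absurd (haR_M u huR h0) hu
      · rfl
    set q : ι → ι → ℝ := fun x y => if x ∈ M ∨ y ∈ M then P x y else max (P x y) (P' x y)
      with hqdef
    have hq0 : ∀ x y, 0 ≤ q x y := by
      intro x y
      simp only [hqdef]
      split_ifs with h
      · exact hP.1.1 x y
      · exact le_trans (hP.1.1 x y) (le_max_left _ _)
    have hql : ∀ x y, q x y ≤ l x y := by
      intro x y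
      simp only [hqdef]
      split_ifs with h
      · exact hP.1.2.1 x y
      · exact max_le (hP.1.2.1 x y) (hP'lel x y)
    have hPq : ∀ x y, P x y ≤ q x y := by
      intro x y
      simp only [hqdef]
      split_ifs with h
      · exact le_refl _
      · exact le_max_left _ _
    have hP'q : ∀ u, u ∉ M → ∀ x, P' x u ≤ q x u := by
      intro u hu x
      by_cases hxM : x ∈ M
      · have hqx : q x u = P x u := by simp only [hqdef]; rw [if_pos (Or.inl hxM)]
        have hzero : l' x u = 0 := by
          by_cases huj : u = j
          · subst huj; exact hMl' x hxM
          · have h0 : l x u = 0 := (hcross x u hxM hu huj).1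
            have := hl'le x u
            have := hP'.1.1 x u
            have h2 := hP'.1.2.1 x u
            nlinarith [hl'le x u, hP'.1.1 x u, hP'.1.2.1 x u]
        rw [hqx]
        calc P' x u ≤ l' x u := hP'.1.2.1 x u
          _ = 0 := hzero
          _ ≤ P x u := hP.1.1 x u
      · have hqx : q x u = max (P x u) (P' x u) := by
          simp only [hqdef]
          rw [if_neg]
          rintro (h | h)
          · exact hxM h
          · exact hu h
        rw [hqx]
        exact le_max_right _ _
    have hqf : ∀ u y, q u y ≤ Phi α β e l q u y := by
      intro u y
      by_cases huM : u ∈ M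
      · have hrow : q u y = P u y := by simp only [hqdef]; rw [if_pos (Or.inl huM)]
        have hin : (∑ x, q x u) = ∑ x, P x u :=
          Finset.sum_congr rfl fun x _ => by simp only [hqdef]; rw [if_pos (Or.inr huM)]
        have hPhiEq : Phi α β e l q u y = Phi α β e l P u y := by
          unfold Phi; rw [hin]
        rw [hrow, hPhiEq]
        exact le_of_eq (clearing_phi hP.1 u y).symm
      · unfold Phi
        split_ifs with hsol
        · exact hql u y
        · have hsol' : e u + ∑ x, q x u < ∑ z, l u z := not_le.mp hsol
          have hinq0 : (0:ℝ) ≤ ∑ x, q x u := Finset.sum_nonneg fun x _ => hq0 x u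
          have hL : (0:ℝ) < ∑ z, l u z := lt_of_le_of_lt (add_nonneg (he u) hinq0) hsol'
          have hinP : (∑ x, P x u) ≤ ∑ x, q x u := Finset.sum_le_sum fun x _ => hPq x u
          have hinP' : (∑ x, P' x u) ≤ ∑ x, q x u := Finset.sum_le_sum fun x _ => hP'q u huM x
          have hPdef : e u + ∑ x, P x u < ∑ z, l u z :=
            lt_of_le_of_lt (add_le_add_right hinP _) hsol'
          have hPval := hP.1.2.2.2 u hPdef y
          have h1 : P u y ≤ (α * e u + β * ∑ x, q x u) * l u y / (∑ z, l u z) := by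
            rw [hPval]
            refine div_le_div_right'' (mul_le_mul_of_nonneg_right ?_ (hl u y)) hL
            nlinarith
          by_cases hyM : y ∈ M
          · have hqy : q u y = P u y := by simp only [hqdef]; rw [if_pos (Or.inr hyM)]
            rw [hqy]; exact h1
          · have hqy : q u y = max (P u y) (P' u y) := by
              simp only [hqdef]
              rw [if_neg]
              rintro (h | h)
              · exact huM h
              · exact hyM h
            rw [hqy]
            refine max_le h1 ?_
            have hL'row := hrowl u huM
            have hL'sum : (∑ z, l' u z) = ∑ z, l u z :=
              Finset.sum_congr rfl fun z _ => hL'row z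
            have hP'def : e u + ∑ x, P' x u < ∑ z, l' u z := by
              rw [hL'sum]
              exact lt_of_le_of_lt (add_le_add_right hinP' _) hsol'
            have hP'val := hP'.1.2.2.2 u hP'def y
            rw [hP'val, hL'sum, hL'row y]
            refine div_le_div_right'' (mul_le_mul_of_nonneg_right ?_ (hl u y)) hL
            nlinarith
    have hqP : ∀ x y, q x y ≤ P x y := le_maxClearing hα₀ hα₁ hβ₀ hβ₁ he hl hP hq0 hql hqf
    intro x
    by_cases hxM : x ∈ M
    · calc P' x j ≤ l' x j := hP'.1.2.1 x j
        _ = 0 := hMl' x hxM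
        _ ≤ P x j := hP.1.1 x j
    · have hqx : q x j = max (P x j) (P' x j) := by
        simp only [hqdef]
        rw [if_neg]
        rintro (h | h)
        · exact hxM h
        · exact hjM h
      have h := hqP x j
      rw [hqx] at h
      exact le_trans (le_max_right _ _) h
  · -- cycle case
    by_cases hin : σ.symm j ∈ R
    · intro x
      have hz : l' x j = 0 := by
        simp only [hl'def]
        split_ifs with h
        · rfl
        · have hx : x ∉ R := fun hxR => h ⟨by trivial, hxR⟩
          rcases eq_or_lt_of_le (hl x j) with h0 | h0
          · exact h0.symm
          · have : j = σ x := (hiff x j).mp h0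
            have : σ.symm j = x := by rw [this, Equiv.symm_apply_apply]
            exact absurd (this ▸ hin) hx
      calc P' x j ≤ l' x j := hP'.1.2.1 x j
        _ = 0 := hz
        _ ≤ P x j := hP.1.1 x j
    · have hll : l' = l := by
        funext a b
        simp only [hl'def]
        split_ifs with h
        · obtain ⟨rfl, haR⟩ := h
          rcases eq_or_lt_of_le (hl a b) with h0 | h0
          · exact h0
          · have h1 : b = σ a := (hiff a b).mp h0
            have h2 : σ.symm b = a := by rw [h1, Equiv.symm_apply_apply]
            exact absurd (h2 ▸ haR) hin
        · rfl
      rw [hll] at hP'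
      exact fun x => hP.2 P' hP'.1 x j
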